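/- For every odd positive integer x, E(η_x) ≥ x/(1+u), and for every even positive integer x, E(η_x) ≤ x/(1+u) + u(1−u)/(1+u). -/

import Mathlib

open MeasureTheory ProbabilityTheory Finset
set_option linter.unusedSectionVars false

noncomputable def pw (u : ℝ) : ℕ → ℕ → ℝ
  | 0, 0 => 1
  | 0, _+1 => 0
  | _+1, 0 => 0
  | y+1, 1 => (1-u) * pw u y 0
  | y+1, (x+2) => (1-u) * pw u y (x+1) + u * pw u y x

lemma pw_nonneg {u : ℝ} (h0 : 0 < u) (h1 : u < 1) : ∀ y x, 0 ≤ pw u y x := by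
  intro y
  induction y with
  | zero => rintro (_|x) <;> simp [pw]
  | succ y ih =>
    rintro (_|_|x) <;> simp only [pw]
    · positivity
    · have := ih 0; nlinarith
    · have := ih (x+1); have := ih x; nlinarith

lemma pw_eq_zero {u : ℝ} : ∀ y x, x < y → pw u y x = 0 := by
  intro y
  induction y with
  | zero => exact fun x hx => absurd hx (by omega)
  | succ y ih =>
    rintro (_|_|x) h
    · simp [pw]
    · simp only [pw]
      rw [ih 0 (by omega)]; ring
    · simp only [pw]
      rw [ih (x+1) (by omega), ih x (by omega)]; ring

noncomputable def hsum (u : ℝ) (x : ℕ) : ℝ := ∑ z ∈ Finset.range (x+1), pw u z x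
noncomputable def nsum (u : ℝ) (x : ℕ) : ℝ := ∑ z ∈ Finset.range (x+1), (z:ℝ) * pw u z x

lemma hsum_rec (u : ℝ) (x : ℕ) :
    hsum u (x+2) = (1-u) * hsum u (x+1) + u * hsum u x := by
  unfold hsum
  rw [Finset.sum_range_succ' (fun z => pw u z (x+2))]
  simp only [pw]
  rw [Finset.sum_add_distrib]
  have e1 : ∑ i ∈ range (x+2), (1-u) * pw u (i) (x+1) = (1-u) * ∑ z ∈ range (x+2), pw u z (x+1) := by
    rw [Finset.mul_sum]
  have e2 : ∑ i ∈ range (x+2), u * pw u i x = u * ∑ z ∈ range (x+1), pw u z x := by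
    rw [Finset.sum_range_succ, pw_eq_zero (x+1) x (by omega), Finset.mul_sum]
    ring
  rw [e1, e2]; ring

lemma nsum_rec (u : ℝ) (x : ℕ) :
    nsum u (x+2) = (1-u) * (nsum u (x+1) + hsum u (x+1)) + u * (nsum u x + hsum u x) := by
  unfold nsum hsum
  rw [Finset.sum_range_succ' (fun z => (z:ℝ) * pw u z (x+2))]
  simp only [pw]
  have expand : ∀ i : ℕ, (((i+1:ℕ)):ℝ) * ((1-u) * pw u i (x+1) + u * pw u i x)
      = ((1-u) * ((i:ℝ) * pw u i (x+1)) + (1-u) * pw u i (x+1))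
        + ((u * ((i:ℝ) * pw u i x)) + u * pw u i x) := by intro i; push_cast; ring
  rw [Finset.sum_congr rfl (fun i _ => expand i), Finset.sum_add_distrib,
    Finset.sum_add_distrib, Finset.sum_add_distrib]
  have eA : ∑ i ∈ range (x+2), (1-u) * ((i:ℝ) * pw u i (x+1))
      = (1-u) * ∑ i ∈ range (x+2), (i:ℝ) * pw u i (x+1) := by rw [Finset.mul_sum]
  have eB : ∑ i ∈ range (x+2), (1-u) * pw u i (x+1)
      = (1-u) * ∑ i ∈ range (x+2), pw u i (x+1) := by rw [Finset.mul_sum]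
  have ec : ∑ i ∈ range (x+2), u * ((i:ℝ) * pw u i x) = u * ∑ i ∈ range (x+1), (i:ℝ) * pw u i x := by
    rw [Finset.sum_range_succ, pw_eq_zero (x+1) x (by omega), Finset.mul_sum]; ring
  have ed : ∑ i ∈ range (x+2), u * pw u i x = u * ∑ i ∈ range (x+1), pw u i x := by
    rw [Finset.sum_range_succ, pw_eq_zero (x+1) x (by omega), Finset.mul_sum]; ring
  rw [eA, eB, ec, ed]
  ring

lemma hsum_cf {u : ℝ} (hne : (1:ℝ) + u ≠ 0) (x : ℕ) :
    hsum u x = (1 - (-u)^(x+1))/(1+u) := by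
  induction x using Nat.strong_induction_on with
  | _ x ih =>
    match x with
    | 0 =>
      unfold hsum
      simp [Finset.sum_range_succ, pw]
      field_simp
    | 1 =>
      unfold hsum
      simp [Finset.sum_range_succ, pw]
      field_simp
      ring
    | (x+2) =>
      rw [hsum_rec, ih (x+1) (by omega), ih x (by omega)]
      field_simp
      ring

lemma nsum_cf {u : ℝ} (hne : (1:ℝ) + u ≠ 0) (x : ℕ) :
    nsum u x = (((x:ℝ)+1)*(1+u)*(1+(-u)^(x+2)) - (1+u^2)*(1-(-u)^(x+1)))/(1+u)^3 := by
  induction x using Nat.strong_induction_on with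
  | _ x ih =>
    match x with
    | 0 =>
      unfold nsum
      simp [Finset.sum_range_succ, pw]
      field_simp
      ring
    | 1 =>
      unfold nsum
      simp [Finset.sum_range_succ, pw]
      field_simp
      ring
    | (x+2) =>
      rw [nsum_rec, ih (x+1) (by omega), ih x (by omega), hsum_cf hne, hsum_cf hne]
      push_cast
      field_simp
      ring

section
variable {Ω : Type*} [MeasurableSpace Ω] {P : Measure Ω} [IsProbabilityMeasure P]
  {u : ℝ} {ε : ℕ → Ω → ℕ}

lemma good_one (hu : u ∈ Set.Ioo (0:ℝ) 1) (hmeas : ∀ k, Measurable (ε k))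
    (h1 : ∀ k, P {ω | ε k ω = 1} = ENNReal.ofReal (1 - u))
    (h2 : ∀ k, P {ω | ε k ω = 2} = ENNReal.ofReal u) (k : ℕ) :
    P {ω | ε k ω = 1 ∨ ε k ω = 2} = 1 := by
  have hd : Disjoint {ω | ε k ω = 1} {ω | ε k ω = 2} := by
    rw [Set.disjoint_left]
    rintro ω hω1 hω2
    simp only [Set.mem_setOf_eq] at hω1 hω2
    omega
  have hms : MeasurableSet {ω | ε k ω = 2} := (hmeas k) (measurableSet_singleton 2)
  have : {ω | ε k ω = 1 ∨ ε k ω = 2} = {ω | ε k ω = 1} ∪ {ω | ε k ω = 2} := rfl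
  rw [this, measure_union hd hms, h1 k, h2 k,
    ← ENNReal.ofReal_add (by linarith [hu.2]) (le_of_lt hu.1)]
  norm_num

lemma good_compl_zero (hu : u ∈ Set.Ioo (0:ℝ) 1) (hmeas : ∀ k, Measurable (ε k))
    (h1 : ∀ k, P {ω | ε k ω = 1} = ENNReal.ofReal (1 - u))
    (h2 : ∀ k, P {ω | ε k ω = 2} = ENNReal.ofReal u) (k : ℕ) :
    P {ω | ε k ω = 1 ∨ ε k ω = 2}ᶜ = 0 := by
  rw [prob_compl_eq_zero_iff]
  · exact good_one hu hmeas h1 h2 k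
  · exact ((hmeas k) (measurableSet_singleton 1)).union ((hmeas k) (measurableSet_singleton 2))

example (hmeas : ∀ k, Measurable (ε k)) (hindep : iIndepFun ε P) (y : ℕ) :
    IndepFun (∑ j ∈ Finset.range y, ε j) (ε y) P :=
  hindep.indepFun_sum_range_succ hmeas y

end

section
set_option linter.unusedSectionVars false
variable {Ω : Type*} [MeasurableSpace Ω] {P : Measure Ω} [IsProbabilityMeasure P]
  {u : ℝ} {ε : ℕ → Ω → ℕ} {σ : ℕ → Ω → ℕ}

lemma sigma_fun_eq (hσ : ∀ y ω, σ y ω = ∑ k ∈ Finset.range y, ε k ω) (y : ℕ) :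
    σ y = ∑ k ∈ Finset.range y, ε k := by
  funext ω
  rw [hσ, Finset.sum_apply]

lemma sigma_meas (hmeas : ∀ k, Measurable (ε k))
    (hσ : ∀ y ω, σ y ω = ∑ k ∈ Finset.range y, ε k ω) (y : ℕ) : Measurable (σ y) := by
  have : σ y = fun ω => ∑ k ∈ Finset.range y, ε k ω := funext fun ω => hσ y ω
  rw [this]
  exact Finset.measurable_sum _ fun k _ => hmeas k

lemma indep_step (hmeas : ∀ k, Measurable (ε k))
    (hindep : iIndepFun ε P)
    (hσ : ∀ y ω, σ y ω = ∑ k ∈ Finset.range y, ε k ω) (y a b : ℕ) :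
    P ({ω | σ y ω = a} ∩ {ω | ε y ω = b}) = P {ω | σ y ω = a} * P {ω | ε y ω = b} := by
  have hi : IndepFun (σ y) (ε y) P := by
    rw [sigma_fun_eq hσ]
    exact hindep.indepFun_sum_range_succ hmeas y
  exact hi.measure_inter_preimage_eq_mul {a} {b} (measurableSet_singleton a)
    (measurableSet_singleton b)
end

section
set_option linter.unusedSectionVars false
variable {Ω : Type*} [MeasurableSpace Ω] {P : Measure Ω} [IsProbabilityMeasure P]
  {u : ℝ} {ε : ℕ → Ω → ℕ} {σ : ℕ → Ω → ℕ}

lemma dist_eq (hu : u ∈ Set.Ioo (0:ℝ) 1) (hmeas : ∀ k, Measurable (ε k))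
    (hindep : iIndepFun ε P)
    (h1 : ∀ k, P {ω | ε k ω = 1} = ENNReal.ofReal (1 - u))
    (h2 : ∀ k, P {ω | ε k ω = 2} = ENNReal.ofReal u)
    (hσ : ∀ y ω, σ y ω = ∑ k ∈ Finset.range y, ε k ω) :
    ∀ y x, P {ω | σ y ω = x} = ENNReal.ofReal (pw u y x) := by
  obtain ⟨hu0, hu1⟩ := hu
  intro y
  induction y with
  | zero =>
    intro x
    have h0 : ∀ ω, σ 0 ω = 0 := fun ω => by rw [hσ]; simp
    match x with
    | 0 =>
      have : {ω | σ 0 ω = 0} = Set.univ := by ext ω; simp [h0]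
      rw [this]
      simp [pw]
    | x+1 =>
      have : {ω | σ 0 ω = x+1} = ∅ := by ext ω; simp [h0]
      rw [this]
      simp [pw]
  | succ y ih =>
    intro x
    have hstep : ∀ ω, σ (y+1) ω = σ y ω + ε y ω := fun ω => by
      rw [hσ, hσ, Finset.sum_range_succ]
    have hGc : P {ω | ε y ω = 1 ∨ ε y ω = 2}ᶜ = 0 :=
      good_compl_zero ⟨hu0, hu1⟩ hmeas h1 h2 y
    have hPG : P {ω | σ (y+1) ω = x} =
        P ({ω | σ (y+1) ω = x} ∩ {ω | ε y ω = 1 ∨ ε y ω = 2}) :=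
      (measure_inter_conull hGc).symm
    match x with
    | 0 =>
      have he : {ω | σ (y+1) ω = 0} ∩ {ω | ε y ω = 1 ∨ ε y ω = 2} = ∅ := by
        ext ω
        simp only [Set.mem_inter_iff, Set.mem_setOf_eq, Set.mem_empty_iff_false, iff_false,
          not_and]
        intro h
        rw [hstep ω] at h
        omega
      rw [hPG, he]
      simp [pw]
    | 1 =>
      have he : {ω | σ (y+1) ω = 1} ∩ {ω | ε y ω = 1 ∨ ε y ω = 2}
          = {ω | σ y ω = 0} ∩ {ω | ε y ω = 1} := by
        ext ω
        simp only [Set.mem_inter_iff, Set.mem_setOf_eq]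
        rw [hstep ω]
        omega
      rw [hPG, he, indep_step hmeas hindep hσ, ih 0, h1 y,
        ← ENNReal.ofReal_mul (pw_nonneg hu0 hu1 y 0)]
      show _ = ENNReal.ofReal ((1-u) * pw u y 0)
      rw [mul_comm]
    | (x+2) =>
      have he : {ω | σ (y+1) ω = x+2} ∩ {ω | ε y ω = 1 ∨ ε y ω = 2}
          = ({ω | σ y ω = x+1} ∩ {ω | ε y ω = 1}) ∪ ({ω | σ y ω = x} ∩ {ω | ε y ω = 2}) := by
        ext ω
        simp only [Set.mem_inter_iff, Set.mem_setOf_eq, Set.mem_union]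
        rw [hstep ω]
        omega
      have hdisj : Disjoint ({ω | σ y ω = x+1} ∩ {ω | ε y ω = 1})
          (({ω | σ y ω = x} ∩ {ω | ε y ω = 2})) := by
        rw [Set.disjoint_left]
        rintro ω ⟨-, hω1⟩ ⟨-, hω2⟩
        simp only [Set.mem_setOf_eq] at hω1 hω2
        omega
      have hms : MeasurableSet ({ω | σ y ω = x} ∩ {ω | ε y ω = 2}) :=
        ((sigma_meas hmeas hσ y) (measurableSet_singleton x)).inter
          ((hmeas y) (measurableSet_singleton 2))
      rw [hPG, he, measure_union hdisj hms, indep_step hmeas hindep hσ,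
        indep_step hmeas hindep hσ, ih (x+1), ih x, h1 y, h2 y,
        ← ENNReal.ofReal_mul (pw_nonneg hu0 hu1 y (x+1)),
        ← ENNReal.ofReal_mul (pw_nonneg hu0 hu1 y x),
        ← ENNReal.ofReal_add (by nlinarith [pw_nonneg hu0 hu1 y (x+1)])
          (by nlinarith [pw_nonneg hu0 hu1 y x])]
      show _ = ENNReal.ofReal ((1-u) * pw u y (x+1) + u * pw u y x)
      ring_nf

end

lemma odd_final {u t xr : ℝ} (hu0 : 0 < u) (hu1 : u < 1) (ht0 : 0 < t) (ht1 : t < 1)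
    (hx : 1 ≤ xr) :
    xr/(1+u) ≤ ((xr+1)*(1+u)*(1+ -(t*u)) - (1+u^2)*(1-t))/(1+u)^3 / ((1-t)/(1+u)) := by
  have h1u : (0:ℝ) < 1+u := by linarith
  have h1t : (0:ℝ) < 1-t := by linarith
  have key : xr*(1-t)*(1+u) ≤ (xr+1)*(1+u)*(1+ -(t*u)) - (1+u^2)*(1-t) := by
    nlinarith [mul_nonneg (mul_nonneg ht0.le (by linarith : (0:ℝ) ≤ xr))
        (by nlinarith : (0:ℝ) ≤ 1-u^2),
      mul_nonneg ht0.le (by linarith : (0:ℝ) ≤ 1-u),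
      mul_nonneg hu0.le (by linarith : (0:ℝ) ≤ 1-u)]
  calc xr/(1+u) = xr*(1-t)*(1+u) / ((1-t)*(1+u)^2) := by
        field_simp
    _ ≤ ((xr+1)*(1+u)*(1+ -(t*u)) - (1+u^2)*(1-t)) / ((1-t)*(1+u)^2) := by
        exact div_le_div_of_nonneg_right key (by positivity)
    _ = ((xr+1)*(1+u)*(1+ -(t*u)) - (1+u^2)*(1-t))/(1+u)^3 / ((1-t)/(1+u)) := by
        field_simp

lemma even_final {u t xr : ℝ} (hu0 : 0 < u) (hu1 : u < 1) (ht0 : 0 < t) (ht1 : t < 1)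
    (hx : 1 ≤ xr) :
    ((xr+1)*(1+u)*(1+ t*u) - (1+u^2)*(1+t))/(1+u)^3 / ((1+t)/(1+u))
      ≤ xr/(1+u) + u*(1-u)/(1+u) := by
  have h1u : (0:ℝ) < 1+u := by linarith
  have h1t : (0:ℝ) < 1+t := by linarith
  have key : (xr+1)*(1+u)*(1+ t*u) - (1+u^2)*(1+t) ≤ (xr + u*(1-u))*(1+t)*(1+u) := by
    nlinarith [mul_nonneg (mul_nonneg ht0.le (by linarith : (0:ℝ) ≤ xr))
        (by nlinarith : (0:ℝ) ≤ 1-u^2),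
      mul_nonneg ht0.le (by nlinarith [pow_lt_one₀ hu0.le hu1 (three_ne_zero)] : (0:ℝ) ≤ 1-u^3),
      mul_nonneg (mul_nonneg hu0.le hu0.le) (by linarith : (0:ℝ) ≤ 1-u)]
  calc ((xr+1)*(1+u)*(1+ t*u) - (1+u^2)*(1+t))/(1+u)^3 / ((1+t)/(1+u))
      = ((xr+1)*(1+u)*(1+ t*u) - (1+u^2)*(1+t)) / ((1+t)*(1+u)^2) := by
        field_simp
    _ ≤ ((xr + u*(1-u))*(1+t)*(1+u)) / ((1+t)*(1+u)^2) :=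
        div_le_div_of_nonneg_right key (by positivity)
    _ = xr/(1+u) + u*(1-u)/(1+u) := by
        field_simp

section
set_option linter.unusedSectionVars false
variable {Ω : Type*} [MeasurableSpace Ω] {P : Measure Ω} [IsProbabilityMeasure P]
  {u : ℝ} {ε : ℕ → Ω → ℕ} {σ : ℕ → Ω → ℕ}

lemma pw_zero_left {u : ℝ} (x : ℕ) (hx : 1 ≤ x) : pw u 0 x = 0 := by
  match x with
  | x+1 => simp [pw]

lemma hit_eq (hu : u ∈ Set.Ioo (0:ℝ) 1) (hmeas : ∀ k, Measurable (ε k))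
    (hindep : iIndepFun ε P)
    (h1 : ∀ k, P {ω | ε k ω = 1} = ENNReal.ofReal (1 - u))
    (h2 : ∀ k, P {ω | ε k ω = 2} = ENNReal.ofReal u)
    (hσ : ∀ y ω, σ y ω = ∑ k ∈ Finset.range y, ε k ω)
    (x : ℕ) (hx : 1 ≤ x) :
    P {ω | ∃ z, 1 ≤ z ∧ σ z ω = x} = ENNReal.ofReal (hsum u x) := by
  obtain ⟨hu0, hu1⟩ := hu
  set G : Set Ω := ⋂ k, {ω | ε k ω = 1 ∨ ε k ω = 2} with hG
  have hGmeas : MeasurableSet G := MeasurableSet.iInter fun k =>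
    ((hmeas k) (measurableSet_singleton 1)).union ((hmeas k) (measurableSet_singleton 2))
  have hGc : P Gᶜ = 0 := by
    rw [hG, Set.compl_iInter]
    exact measure_iUnion_null fun k => good_compl_zero ⟨hu0, hu1⟩ hmeas h1 h2 k
  have hmemG : ∀ ω, ω ∈ G → ∀ k, 1 ≤ ε k ω := by
    intro ω hω k
    have := Set.mem_iInter.1 hω k
    simp only [Set.mem_setOf_eq] at this
    omega
  -- lower bound and strict monotonicity on G
  have hlb : ∀ ω ∈ G, ∀ z, z ≤ σ z ω := by
    intro ω hω z
    induction z with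
    | zero => omega
    | succ z ih =>
      have : σ (z+1) ω = σ z ω + ε z ω := by rw [hσ, hσ, Finset.sum_range_succ]
      have := hmemG ω hω z
      omega
  have hsm : ∀ ω ∈ G, ∀ z z', z < z' → σ z ω < σ z' ω := by
    intro ω hω
    have : StrictMono (fun z => σ z ω) := by
      apply strictMono_nat_of_lt_succ
      intro z
      have he : σ (z+1) ω = σ z ω + ε z ω := by rw [hσ, hσ, Finset.sum_range_succ]
      have := hmemG ω hω z
      omega
    exact fun z z' h => this h
  -- decompose the hitting event
  have hset : {ω | ∃ z, 1 ≤ z ∧ σ z ω = x} ∩ G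
      = ⋃ z ∈ Finset.Icc 1 x, ({ω | σ z ω = x} ∩ G) := by
    ext ω
    simp only [Set.mem_inter_iff, Set.mem_setOf_eq, Set.mem_iUnion, Finset.mem_Icc,
      exists_prop]
    constructor
    · rintro ⟨⟨z, hz1, hzx⟩, hωG⟩
      refine ⟨z, ⟨hz1, ?_⟩, hzx, hωG⟩
      have := hlb ω hωG z
      omega
    · rintro ⟨z, ⟨hz1, _⟩, hzx, hωG⟩
      exact ⟨⟨z, hz1, hzx⟩, hωG⟩
  have hdisj : (↑(Finset.Icc 1 x) : Set ℕ).PairwiseDisjoint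
      (fun z => {ω | σ z ω = x} ∩ G) := by
    intro a _ b _ hab
    rw [Function.onFun, Set.disjoint_left]
    rintro ω ⟨ha', hωG⟩ ⟨hb', -⟩
    simp only [Set.mem_setOf_eq] at ha' hb'
    rcases lt_or_gt_of_ne hab with h | h
    · exact absurd (hsm ω hωG a b h) (by omega)
    · exact absurd (hsm ω hωG b a h) (by omega)
  have hmeasz : ∀ z ∈ Finset.Icc 1 x, MeasurableSet ({ω | σ z ω = x} ∩ G) := fun z _ =>
    ((sigma_meas hmeas hσ z) (measurableSet_singleton x)).inter hGmeas
  calc P {ω | ∃ z, 1 ≤ z ∧ σ z ω = x}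
      = P ({ω | ∃ z, 1 ≤ z ∧ σ z ω = x} ∩ G) := (measure_inter_conull hGc).symm
    _ = P (⋃ z ∈ Finset.Icc 1 x, ({ω | σ z ω = x} ∩ G)) := by rw [hset]
    _ = ∑ z ∈ Finset.Icc 1 x, P ({ω | σ z ω = x} ∩ G) :=
        measure_biUnion_finset hdisj hmeasz
    _ = ∑ z ∈ Finset.Icc 1 x, ENNReal.ofReal (pw u z x) := by
        refine Finset.sum_congr rfl fun z _ => ?_
        rw [measure_inter_conull hGc, dist_eq ⟨hu0, hu1⟩ hmeas hindep h1 h2 hσ]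
    _ = ENNReal.ofReal (∑ z ∈ Finset.Icc 1 x, pw u z x) :=
        (ENNReal.ofReal_sum_of_nonneg fun z _ => pw_nonneg hu0 hu1 z x).symm
    _ = ENNReal.ofReal (hsum u x) := by
        congr 1
        unfold hsum
        refine Finset.sum_subset ?_ ?_
        · intro z hz
          simp only [Finset.mem_Icc] at hz
          simp only [Finset.mem_range]
          omega
        · intro z hz hz'
          simp only [Finset.mem_range] at hz
          simp only [Finset.mem_Icc] at hz'
          have hz0 : z = 0 := by omega
          rw [hz0]
          exact pw_zero_left x hx

end

theorem conditional_hitting_time_expectation_parity_bounds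
    (Ω : Type*) [MeasurableSpace Ω] (P : Measure Ω) [IsProbabilityMeasure P]
    (u : ℝ) (hu : u ∈ Set.Ioo (0 : ℝ) 1)
    (ε : ℕ → Ω → ℕ) (hmeas : ∀ k, Measurable (ε k))
    (hindep : iIndepFun ε P)
    (h1 : ∀ k, P {ω | ε k ω = 1} = ENNReal.ofReal (1 - u))
    (h2 : ∀ k, P {ω | ε k ω = 2} = ENNReal.ofReal u)
    (σ : ℕ → Ω → ℕ) (hσ : ∀ y ω, σ y ω = ∑ k ∈ Finset.range y, ε k ω)
    (x : ℕ) (hx : 1 ≤ x) :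
    (Odd x →
      (x : ℝ) / (1 + u) ≤ ∑' y : ℕ, (y : ℝ) *
        ((P {ω | σ y ω = x}).toReal / (P {ω | ∃ z, 1 ≤ z ∧ σ z ω = x}).toReal)) ∧
    (Even x →
      (∑' y : ℕ, (y : ℝ) *
        ((P {ω | σ y ω = x}).toReal / (P {ω | ∃ z, 1 ≤ z ∧ σ z ω = x}).toReal))
        ≤ (x : ℝ) / (1 + u) + u * (1 - u) / (1 + u)) := by
  obtain ⟨hu0, hu1⟩ := hu
  have h1u : (0:ℝ) < 1 + u := by linarith
  have hne : (1:ℝ) + u ≠ 0 := by linarith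
  have htpos : (0:ℝ) < u^(x+1) := pow_pos hu0 _
  have htlt : u^(x+1) < 1 := pow_lt_one₀ hu0.le hu1 (by omega)
  have hhpos : 0 < hsum u x := by
    rw [hsum_cf hne]
    have habs : (-u)^(x+1) ≤ u^(x+1) := by
      calc (-u)^(x+1) ≤ |(-u)^(x+1)| := le_abs_self _
        _ = u^(x+1) := by rw [abs_pow, abs_neg, abs_of_pos hu0]
    exact div_pos (by linarith) h1u
  have hdist := dist_eq ⟨hu0, hu1⟩ hmeas hindep h1 h2 hσ
  have hhit := hit_eq ⟨hu0, hu1⟩ hmeas hindep h1 h2 hσ x hx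
  have hhr : (P {ω | ∃ z, 1 ≤ z ∧ σ z ω = x}).toReal = hsum u x := by
    rw [hhit, ENNReal.toReal_ofReal hhpos.le]
  have hterm : ∀ y : ℕ, (y:ℝ) *
      ((P {ω | σ y ω = x}).toReal / (P {ω | ∃ z, 1 ≤ z ∧ σ z ω = x}).toReal)
      = (y:ℝ) * pw u y x / hsum u x := by
    intro y
    rw [hdist y x, ENNReal.toReal_ofReal (pw_nonneg hu0 hu1 y x), hhr, mul_div_assoc]
  have htsum : (∑' y : ℕ, (y:ℝ) *
      ((P {ω | σ y ω = x}).toReal / (P {ω | ∃ z, 1 ≤ z ∧ σ z ω = x}).toReal))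
      = nsum u x / hsum u x := by
    calc (∑' y : ℕ, (y:ℝ) *
        ((P {ω | σ y ω = x}).toReal / (P {ω | ∃ z, 1 ≤ z ∧ σ z ω = x}).toReal))
        = ∑' y : ℕ, (y:ℝ) * pw u y x / hsum u x := tsum_congr hterm
      _ = ∑ y ∈ Finset.range (x+1), (y:ℝ) * pw u y x / hsum u x := by
          apply tsum_eq_sum
          intro y hy
          simp only [Finset.mem_range] at hy
          rw [pw_eq_zero y x (by omega)]
          simp
      _ = nsum u x / hsum u x := by
          rw [← Finset.sum_div]
          unfold nsum
          rfl
  have hxr : (1:ℝ) ≤ (x:ℝ) := by exact_mod_cast hx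
  rw [htsum]
  constructor
  · intro hodd
    have he1 : (-u)^(x+1) = u^(x+1) := Even.neg_pow (Odd.add_one hodd) u
    have he2 : (-u)^(x+2) = -(u^(x+1)*u) := by
      have ho2 : Odd (x+2) := by
        obtain ⟨m, rfl⟩ := hodd
        exact ⟨m+1, by ring⟩
      rw [Odd.neg_pow ho2, pow_succ]
    rw [nsum_cf hne, hsum_cf hne, he1, he2]
    exact odd_final hu0 hu1 htpos htlt hxr
  · intro heven
    have he1 : (-u)^(x+1) = -(u^(x+1)) := Odd.neg_pow (Even.add_one heven) u
    have he2 : (-u)^(x+2) = u^(x+1)*u := by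
      have he' : Even (x+2) := by
        obtain ⟨m, rfl⟩ := heven
        exact ⟨m+1, by ring⟩
      rw [Even.neg_pow he', pow_succ]
    rw [nsum_cf hne, hsum_cf hne, he1, he2, sub_neg_eq_add]
    exact even_final hu0 hu1 htpos htlt hxr
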